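/- Let X_1,…,X_t be i.i.d. random variables taking values in [0,1] with mean μ. Let X̄_t = (1/t)Σ_{s=1}^t X_s and V_t = (1/t)Σ_{s=1}^t (X_s − X̄_t)². Then for any δ ∈ (0,1), with probability at least 1 − δ, |X̄_t − μ| ≤ √( (2·V_t·ln(3/δ))/t ) + 3·ln(3/δ)/t. -/

import Mathlib

open Real

private lemma mono_aux {f f' : ℝ → ℝ} {a : ℝ} (hd : ∀ x, HasDerivAt f (f' x) x)
    (h' : ∀ x, a ≤ x → 0 ≤ f' x) {x : ℝ} (hx : a ≤ x) : f a ≤ f x := by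
  have hmono : MonotoneOn f (Set.Ici a) := by
    refine monotoneOn_of_deriv_nonneg (convex_Ici a) ?_ ?_ ?_
    · exact fun y _ => (hd y).continuousAt.continuousWithinAt
    · exact fun y _ => (hd y).differentiableAt.differentiableWithinAt
    · intro y hy
      rw [(hd y).deriv]
      exact h' y (le_of_lt (by simpa using hy))
  exact hmono Set.self_mem_Ici hx hx

/-- `e^u ≤ 1 + u + u²/2` for `u ≤ 0`. -/
private lemma exp_le_quad {u : ℝ} (hu : u ≤ 0) : exp u ≤ 1 + u + u^2/2 := by
  have hd : ∀ x : ℝ, HasDerivAt (fun y => 1 + y + y^2/2 - exp y) (1 + x - exp x) x := by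
    intro x
    have : HasDerivAt (fun y : ℝ => 1 + y + y^2/2 - exp y) (0 + 1 + (2*x^1)/2 - exp x) x := by
      exact (((hasDerivAt_const x 1).add (hasDerivAt_id x)).add
        ((hasDerivAt_pow 2 x).div_const 2)).sub (Real.hasDerivAt_exp x)
    convert this using 1; ring
  -- monotone decreasing on (-∞,0]: use g(x) = f(-x)
  have key : ∀ x : ℝ, 0 ≤ x → (0:ℝ) ≤ 1 + (-x) + (-x)^2/2 - exp (-x) := by
    intro x hx
    have hd2 : ∀ y : ℝ, HasDerivAt (fun s => 1 + (-s) + (-s)^2/2 - exp (-s))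
        (-(1 + (-y) - exp (-y))) y := by
      intro y
      have := (hd (-y)).comp y (hasDerivAt_neg y)
      exact this.congr_deriv (by ring)
    have h0 : (fun s : ℝ => 1 + (-s) + (-s)^2/2 - exp (-s)) 0 = 0 := by simp
    have := mono_aux (a := 0) hd2 (fun y hy => by
      have := Real.add_one_le_exp (-y)
      simp only [neg_nonneg]
      linarith) hx
    simpa [h0] using this
  have := key (-u) (by linarith)
  simp only [neg_neg] at this
  linarith

/-- `1 + z + z²/2 ≤ e^z` for `0 ≤ z`. -/
private lemma quad_le_exp {z : ℝ} (hz : 0 ≤ z) : 1 + z + z^2/2 ≤ exp z := by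
  have hd : ∀ x : ℝ, HasDerivAt (fun y => exp y - (1 + y + y^2/2)) (exp x - (1 + x)) x := by
    intro x
    have : HasDerivAt (fun y : ℝ => exp y - (1 + y + y^2/2)) (exp x - (0 + 1 + (2*x^1)/2)) x :=
      (Real.hasDerivAt_exp x).sub (((hasDerivAt_const x 1).add (hasDerivAt_id x)).add
        ((hasDerivAt_pow 2 x).div_const 2))
    convert this using 1; ring
  have := mono_aux (a := 0) hd (fun y hy => by have := Real.add_one_le_exp y; linarith) hz
  simp at this
  linarith
/-- `0 ≤ (u-1)e^u + 1` for `0 ≤ u`. -/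
private lemma aux_p2 {u : ℝ} (hu : 0 ≤ u) : 0 ≤ (u - 1) * exp u + 1 := by
  have hd : ∀ x : ℝ, HasDerivAt (fun y => (y - 1) * exp y + 1) (x * exp x) x := by
    intro x
    refine (((hasDerivAt_id x).sub_const 1).mul (Real.hasDerivAt_exp x)).add_const 1 |>.congr_deriv ?_
    simp only [id_eq]; ring
  have := mono_aux (a := 0) hd (fun y hy => mul_nonneg hy (exp_pos y).le) hu
  simpa using this

/-- `0 ≤ (u-2)e^u + u + 2` for `0 ≤ u`. -/
private lemma aux_p {u : ℝ} (hu : 0 ≤ u) : 0 ≤ (u - 2) * exp u + u + 2 := by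
  have hd : ∀ x : ℝ, HasDerivAt (fun y => (y - 2) * exp y + y + 2) ((x - 1) * exp x + 1) x := by
    intro x
    refine ((((hasDerivAt_id x).sub_const 2).mul (Real.hasDerivAt_exp x)).add
        (hasDerivAt_id x)).add_const 2 |>.congr_deriv ?_
    simp only [id_eq]; ring
  have := mono_aux (a := 0) hd (fun y hy => aux_p2 hy) hu
  simpa using this

/-- for `0 < u ≤ z` : `z(e^u - 1) ≤ u(e^z - 1)`. -/
private lemma aux_G {u z : ℝ} (hu : 0 ≤ u) (huz : u ≤ z) :
    z * (exp u - 1) ≤ u * (exp z - 1) := by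
  have hd : ∀ x : ℝ, HasDerivAt (fun y => u * (exp y - 1) - y * (exp u - 1))
      (u * exp x - (exp u - 1)) x := by
    intro x
    refine (((Real.hasDerivAt_exp x).sub_const 1).const_mul u).sub
        ((hasDerivAt_id x).mul_const (exp u - 1)) |>.congr_deriv ?_
    ring
  have h' : ∀ x, u ≤ x → 0 ≤ u * exp x - (exp u - 1) := by
    intro x hx
    have h1 : exp u ≤ exp x := exp_le_exp.2 hx
    have h2 := aux_p2 hu
    nlinarith [exp_pos u]
  have := mono_aux (a := u) hd h' huz
  simp only [sub_self, mul_comm] at this ⊢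
  nlinarith [this]

/-- Key: for `|u| ≤ z` : `z²(e^u - u - 1) ≤ u²(e^z - z - 1)`. -/
private lemma key_ineq {u z : ℝ} (huz : |u| ≤ z) :
    z^2 * (exp u - u - 1) ≤ u^2 * (exp z - z - 1) := by
  have hz : 0 ≤ z := le_trans (abs_nonneg u) huz
  rcases le_or_gt u 0 with hu | hu
  · -- u ≤ 0 : e^u - u - 1 ≤ u²/2 and z²/2 ≤ e^z - z - 1
    have h1 := exp_le_quad hu
    have h2 := quad_le_exp hz
    nlinarith [sq_nonneg u, sq_nonneg z, sq_nonneg (u*z)]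
  · -- 0 < u ≤ z
    have hu' : 0 ≤ u := hu.le
    have huz' : u ≤ z := le_trans (le_abs_self u) huz
    have hd : ∀ x : ℝ, HasDerivAt (fun y => u^2 * (exp y - y - 1) - y^2 * (exp u - u - 1))
        (u^2 * (exp x - 1) - 2*x * (exp u - u - 1)) x := by
      intro x
      have h := ((((Real.hasDerivAt_exp x).sub (hasDerivAt_id x)).sub_const 1).const_mul
          (u^2)).sub ((hasDerivAt_pow 2 x).mul_const (exp u - u - 1))
      have heq : (fun y : ℝ => u^2 * (exp y - y - 1) - y^2 * (exp u - u - 1))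
          = fun y : ℝ => u ^ 2 * (rexp y - y - 1) - y ^ 2 * (rexp u - u - 1) := rfl
      rw [heq]
      refine h.congr_deriv ?_
      push_cast; ring
    have h' : ∀ x, u ≤ x → 0 ≤ u^2 * (exp x - 1) - 2*x * (exp u - u - 1) := by
      intro x hx
      have hx0 : 0 ≤ x := le_trans hu' hx
      have hG : x * (exp u - 1) ≤ u * (exp x - 1) := aux_G hu' hx
      have hp : 0 ≤ (u - 2) * exp u + u + 2 := aux_p hu'
      -- u²(e^x-1) ≥ u·x·(e^u-1) ≥ 2x(e^u-u-1)
      nlinarith [mul_le_mul_of_nonneg_left hG hu', mul_nonneg hx0 hp]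
    have := mono_aux (a := u) hd h' huz'
    simpa using this
open MeasureTheory ProbabilityTheory in
private lemma integrable_of_bdd {Ω : Type*} [MeasurableSpace Ω] {μ : Measure Ω}
    [IsFiniteMeasure μ] {f : Ω → ℝ} {C : ℝ} (hf : Measurable f) (h : ∀ ω, |f ω| ≤ C) :
    Integrable f μ :=
  (integrable_const C).mono' hf.aestronglyMeasurable
    (Filter.Eventually.of_forall (fun ω => by simpa [Real.norm_eq_abs] using h ω))

/-- `(2 - 2x/3)(e^x - x - 1) ≤ x²` for `0 ≤ x`. -/
private lemma sub_gamma_bound {x : ℝ} (hx : 0 ≤ x) :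
    (2 - 2*x/3) * (exp x - x - 1) ≤ x^2 := by
  -- F(x) = x² - (2 - 2x/3)(e^x - x - 1), F(0)=0, F'(0)=0, F'' = (2/3)((x-1)e^x + 1) ≥ 0
  have hd1 : ∀ y : ℝ, HasDerivAt
      (fun s : ℝ => 2 * s - (2 - 2 / 3 * s) * (exp s - 1) + 2 / 3 * (exp s - s - 1))
      ((2/3)*((y - 1)*exp y + 1)) y := by
    intro y
    have h := ((hasDerivAt_id y).const_mul 2).sub
      ((((hasDerivAt_id y).const_mul (2/3)).const_sub 2).mul
        ((Real.hasDerivAt_exp y).sub_const 1)) |>.add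
      ((((Real.hasDerivAt_exp y).sub (hasDerivAt_id y)).sub_const 1).const_mul (2/3))
    simp only [id_eq] at h
    refine h.congr_deriv ?_
    push_cast; ring
  have hd0 : ∀ y : ℝ, HasDerivAt
      (fun s : ℝ => s ^ 2 - (2 - 2 / 3 * s) * (exp s - s - 1))
      (2 * y - (2 - 2 / 3 * y) * (exp y - 1) + 2 / 3 * (exp y - y - 1)) y := by
    intro y
    have h := ((hasDerivAt_pow 2 y)).sub
      ((((hasDerivAt_id y).const_mul (2/3)).const_sub 2).mul
        (((Real.hasDerivAt_exp y).sub (hasDerivAt_id y)).sub_const 1))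
    simp only [id_eq, Pi.sub_apply] at h
    refine h.congr_deriv ?_
    push_cast; ring
  have h1 : ∀ y : ℝ, 0 ≤ y →
      0 ≤ 2 * y - (2 - 2 / 3 * y) * (exp y - 1) + 2 / 3 * (exp y - y - 1) := by
    intro y hy
    have := mono_aux (a := 0) hd1 (fun z hz => by
      have := aux_p2 hz
      positivity) hy
    simpa using this
  have := mono_aux (a := 0) hd0 h1 hx
  simp at this
  linarith

open MeasureTheory ProbabilityTheory in
private lemma mgf_le_of_bounded {Ω : Type*} [MeasurableSpace Ω] {μ : Measure Ω}
    [IsProbabilityMeasure μ] {Y : Ω → ℝ} (hY : Measurable Y) {c v l : ℝ}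
    (hc : 0 < c) (hl : 0 ≤ l) (hb : ∀ ω, |Y ω| ≤ c)
    (h0 : ∫ ω, Y ω ∂μ = 0) (hv : ∫ ω, (Y ω)^2 ∂μ ≤ v) :
    mgf Y μ l ≤ exp (v * (exp (l*c) - l*c - 1) / c^2) := by
  set K : ℝ := (exp (l*c) - l*c - 1) / c^2 with hK
  have hlc : 0 ≤ l * c := mul_nonneg hl hc.le
  have hKpos : 0 ≤ K := by
    have := Real.add_one_le_exp (l*c)
    have hc2 : (0:ℝ) < c^2 := by positivity
    apply div_nonneg (by linarith) hc2.le
  have hintY : Integrable Y μ := integrable_of_bdd hY hb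
  have hintY2 : Integrable (fun ω => (Y ω)^2) μ := by
    refine integrable_of_bdd (hY.pow_const 2) (C := c^2) (fun ω => ?_)
    rw [abs_of_nonneg (sq_nonneg _)]
    calc (Y ω)^2 = |Y ω|^2 := (sq_abs _).symm
    _ ≤ c^2 := pow_le_pow_left₀ (abs_nonneg _) (hb ω) 2
  have hintE : Integrable (fun ω => exp (l * Y ω)) μ := by
    refine integrable_of_bdd ((hY.const_mul l).exp) (C := exp (l*c)) (fun ω => ?_)
    rw [abs_of_pos (exp_pos _), Real.exp_le_exp]
    exact mul_le_mul_of_nonneg_left (le_trans (le_abs_self (Y ω)) (hb ω)) hl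
  have hpt : ∀ ω, exp (l * Y ω) ≤ 1 + l * Y ω + K * (Y ω)^2 := by
    intro ω
    rcases eq_or_lt_of_le hl with hl0 | hl0
    · simp only [← hl0, zero_mul, Real.exp_zero]
      nlinarith [mul_nonneg hKpos (sq_nonneg (Y ω))]
    · have hz : (0:ℝ) < l * c := mul_pos hl0 hc
      have hkey := key_ineq (u := l * Y ω) (z := l * c)
        (by rw [abs_mul, abs_of_pos hl0]; exact mul_le_mul_of_nonneg_left (hb ω) hl0.le)
      have hz2 : (0:ℝ) < (l*c)^2 := by positivity
      rw [hK]
      rw [div_mul_eq_mul_div, ← sub_nonneg]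
      have expand : (Y ω)^2 * ((exp (l*c) - l*c - 1)) / c^2
          = (l*Y ω)^2 * (exp (l*c) - l*c - 1) / (l*c)^2 := by
        field_simp
      have h2 : exp (l * Y ω) - l * Y ω - 1 ≤ (l*Y ω)^2 * (exp (l*c) - l*c - 1) / (l*c)^2 := by
        rw [le_div_iff₀ hz2]
        nlinarith [hkey]
      calc (0:ℝ) ≤ (l*Y ω)^2 * (exp (l*c) - l*c - 1) / (l*c)^2
            - (exp (l * Y ω) - l * Y ω - 1) := by linarith
        _ = 1 + l * Y ω + (exp (l*c) - l*c - 1) * (Y ω)^2 / c^2 - exp (l * Y ω) := by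
            rw [← expand]; ring
  have hint_rhs : Integrable (fun ω => 1 + l * Y ω + K * (Y ω)^2) μ :=
    ((integrable_const 1).add (hintY.const_mul l)).add (hintY2.const_mul K)
  have h1 : mgf Y μ l ≤ ∫ ω, (1 + l * Y ω + K * (Y ω)^2) ∂μ := by
    rw [mgf]
    exact integral_mono hintE hint_rhs (fun ω => hpt ω)
  have i1 : Integrable (fun ω => 1 + l * Y ω) μ := by
    simpa using (integrable_const (1:ℝ)).add (hintY.const_mul l)
  have h2 : ∫ ω, (1 + l * Y ω + K * (Y ω)^2) ∂μ = 1 + K * ∫ ω, (Y ω)^2 ∂μ := by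
    rw [integral_add i1 (hintY2.const_mul K), integral_add (integrable_const 1)
      (hintY.const_mul l), integral_const, integral_const_mul, integral_const_mul, h0]
    simp
  have h3 : 1 + K * ∫ ω, (Y ω)^2 ∂μ ≤ 1 + v * K := by
    have := mul_le_mul_of_nonneg_left hv hKpos
    nlinarith
  calc mgf Y μ l ≤ 1 + v * K := by linarith
    _ ≤ exp (v * K) := by have := Real.add_one_le_exp (v * K); linarith
    _ = exp (v * (exp (l*c) - l*c - 1) / c^2) := by rw [hK, mul_div_assoc]
private lemma exponent_key {p q c L lam : ℝ} (hp : 0 ≤ p) (hq : 0 < q) (hc : 0 < c)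
    (hL : 0 < L) (hq2 : q^2 = 2*L) (hlam : lam * (p + c*q/3) = q) :
    p^2 * (exp (lam*c) - lam*c - 1) / c^2 + L ≤ lam * (p*q + c*q^2/6) := by
  have hden : 0 < p + c*q/3 := by positivity
  have hlam0 : 0 < lam := by
    rcases le_or_gt lam 0 with h | h
    · nlinarith
    · exact h
  rcases eq_or_lt_of_le hp with hp0 | hp0
  · -- p = 0
    have hlamc : lam * c = 3 := by
      rw [← hp0] at hlam
      have : lam * (c * q / 3) = q := by linarith [hlam]
      nlinarith
    have h1 : p^2 * (exp (lam*c) - lam*c - 1) / c^2 = 0 := by rw [← hp0]; ring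
    rw [h1, ← hp0]
    nlinarith
  · -- p > 0
    have hx : 0 ≤ lam * c := by positivity
    have hlamc3 : lam * c < 3 := by nlinarith
    have hden2 : (0:ℝ) < 2 - 2 * (lam*c) / 3 := by linarith
    have hF := sub_gamma_bound hx
    have hg : exp (lam*c) - lam*c - 1 ≤ (lam*c)^2 / (2 - 2*(lam*c)/3) := by
      rw [le_div_iff₀ hden2]
      nlinarith [hF]
    have key1 : 2 - 2*(lam*c)/3 = 2*lam*p/q := by
      rw [eq_div_iff hq.ne']
      linarith [hlam, mul_comm lam c]
    have key2 : p^2 * ((lam*c)^2 / (2 - 2*(lam*c)/3)) / c^2 = p*q*lam/2 := by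
      rw [key1]
      field_simp
    have step : p^2 * (exp (lam*c) - lam*c - 1) / c^2
        ≤ p^2 * ((lam*c)^2 / (2 - 2*(lam*c)/3)) / c^2 := by gcongr
    have key3 : lam*p*q/2 + lam*c*q^2/6 = L := by nlinarith [hlam]
    nlinarith [step, key2]
open MeasureTheory ProbabilityTheory in
private lemma bernstein_tail {Ω : Type*} [MeasurableSpace Ω] {μ : Measure Ω}
    [IsProbabilityMeasure μ] {n : ℕ} {Y : Fin n → Ω → ℝ} (hmeas : ∀ i, Measurable (Y i))
    {c v L : ℝ} (hc : 0 < c) (hv : 0 ≤ v) (hL : 0 < L)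
    (hb : ∀ i ω, |Y i ω| ≤ c)
    (hindep : iIndepFun Y μ)
    (h0 : ∀ i, ∫ ω, Y i ω ∂μ = 0) (hvar : ∀ i, ∫ ω, (Y i ω)^2 ∂μ ≤ v) :
    μ {ω | Real.sqrt (2 * ((n:ℝ) * v) * L) + c * L / 3 ≤ ∑ i, Y i ω}
      ≤ ENNReal.ofReal (exp (-L)) := by
  have hnv : (0:ℝ) ≤ (n:ℝ) * v := by positivity
  have hp : (0:ℝ) ≤ Real.sqrt ((n:ℝ) * v) := Real.sqrt_nonneg _
  have hp2 : (Real.sqrt ((n:ℝ) * v)) ^ 2 = (n:ℝ) * v := Real.sq_sqrt hnv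
  have hq : (0:ℝ) < Real.sqrt (2 * L) := Real.sqrt_pos.2 (by linarith)
  have hq2 : (Real.sqrt (2 * L)) ^ 2 = 2 * L := Real.sq_sqrt (by linarith)
  obtain ⟨p, hpdef⟩ : ∃ p, Real.sqrt ((n:ℝ) * v) = p := ⟨_, rfl⟩
  obtain ⟨q, hqdef⟩ : ∃ q, Real.sqrt (2 * L) = q := ⟨_, rfl⟩
  rw [hpdef] at hp hp2
  rw [hqdef] at hq hq2
  have hden : 0 < p + c * q / 3 := by positivity
  obtain ⟨lam, hlamdef⟩ : ∃ lam, q / (p + c * q / 3) = lam := ⟨_, rfl⟩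
  have hlam_mul : lam * (p + c * q / 3) = q := by
    rw [← hlamdef]; field_simp
  have hlam : 0 < lam := by rw [← hlamdef]; positivity
  obtain ⟨ε, hεdef⟩ : ∃ ε, Real.sqrt (2 * ((n:ℝ) * v) * L) + c * L / 3 = ε := ⟨_, rfl⟩
  have hεpq : ε = p * q + c * q ^ 2 / 6 := by
    rw [← hεdef, hq2]
    congr 1
    · rw [show 2 * ((n:ℝ) * v) * L = ((n:ℝ)*v) * (2*L) by ring, Real.sqrt_mul hnv,
        hpdef, hqdef]
    · ring
  have hSb : ∀ ω, |∑ i, Y i ω| ≤ (n:ℝ) * c := by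
    intro ω
    calc |∑ i, Y i ω| ≤ ∑ i, |Y i ω| := Finset.abs_sum_le_sum_abs _ _
      _ ≤ ∑ _i : Fin n, c := Finset.sum_le_sum (fun i _ => hb i ω)
      _ = (n:ℝ) * c := by simp [mul_comm]
  have hS_int : Integrable (fun ω => exp (lam * (∑ i, Y i ω))) μ := by
    refine integrable_of_bdd (by fun_prop) (C := exp (lam * ((n:ℝ) * c))) (fun ω => ?_)
    rw [abs_of_pos (exp_pos _), Real.exp_le_exp]
    exact mul_le_mul_of_nonneg_left (le_trans (le_abs_self _) (hSb ω)) hlam.le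
  have hcher := measure_ge_le_exp_mul_mgf (μ := μ) (X := fun ω => ∑ i, Y i ω)
    (t := lam) ε hlam.le hS_int
  have hmgf_sum : mgf (fun ω => ∑ i, Y i ω) μ lam = ∏ i, mgf (Y i) μ lam := by
    have h := hindep.mgf_sum (t := lam) hmeas Finset.univ
    rw [← h]
    congr 1
    funext ω
    simp [Finset.sum_apply]
  have hmgf_le : ∀ i : Fin n, mgf (Y i) μ lam
      ≤ exp (v * (exp (lam * c) - lam * c - 1) / c ^ 2) :=
    fun i => mgf_le_of_bounded (hmeas i) hc hlam.le (hb i) (h0 i) (hvar i)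
  have hprod : ∏ i, mgf (Y i) μ lam
      ≤ exp ((n:ℝ) * (v * (exp (lam * c) - lam * c - 1) / c ^ 2)) := by
    calc ∏ i, mgf (Y i) μ lam
        ≤ ∏ _i : Fin n, exp (v * (exp (lam * c) - lam * c - 1) / c ^ 2) :=
          Finset.prod_le_prod (fun i _ => mgf_nonneg) (fun i _ => hmgf_le i)
      _ = exp ((n:ℝ) * (v * (exp (lam * c) - lam * c - 1) / c ^ 2)) := by
          rw [Finset.prod_const, ← Real.exp_nat_mul]
          simp
  have hkey := exponent_key hp hq hc hL hq2 hlam_mul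
  have hnK : (n:ℝ) * (v * (exp (lam * c) - lam * c - 1) / c ^ 2)
      = p ^ 2 * (exp (lam * c) - lam * c - 1) / c ^ 2 := by
    rw [hp2]; ring
  have hexp_le : exp (-lam * ε) * mgf (fun ω => ∑ i, Y i ω) μ lam ≤ exp (-L) := by
    rw [hmgf_sum]
    calc exp (-lam * ε) * ∏ i, mgf (Y i) μ lam
        ≤ exp (-lam * ε) * exp ((n:ℝ) * (v * (exp (lam * c) - lam * c - 1) / c ^ 2)) :=
          mul_le_mul_of_nonneg_left hprod (exp_pos _).le
      _ = exp ((n:ℝ) * (v * (exp (lam * c) - lam * c - 1) / c ^ 2) - lam * ε) := by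
          rw [← Real.exp_add]; ring_nf
      _ ≤ exp (-L) := by
          rw [Real.exp_le_exp, hnK, hεpq]
          nlinarith [hkey]
  rw [hεdef] at *
  have hne : μ {ω | ε ≤ ∑ i, Y i ω} ≠ ⊤ := measure_ne_top _ _
  rw [ENNReal.le_ofReal_iff_toReal_le hne (exp_pos _).le]
  exact le_trans hcher hexp_le
set_option maxHeartbeats 1000000 in
private lemma det_core {a b s d w r : ℝ} (ha : 0 ≤ a) (hs : 0 ≤ s) (hd : 0 ≤ d) (hw : 0 ≤ w)
    (hr : 0 ≤ r) (hr2 : r^2 = 2) (ha2 : a^2 ≤ 1/3) (hb1 : 1/2 ≤ b) (hb2 : b ≤ 1)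
    (hsb : s^2 ≤ b*(1-b)) (h1 : d ≤ r*a*s + a^2/3)
    (h2 : s^2 ≤ w^2 + d^2 + r*a*b*s + a^2*b^2/3) :
    d ≤ r*a*w + 3*a^2 := by
  by_contra hcon
  push_neg at hcon
  have hr0 : 0 < r := by
    rcases eq_or_lt_of_le hr with h | h
    · exfalso; rw [← h] at hr2; norm_num at hr2
    · exact h
  have ha0 : 0 < a := by
    rcases eq_or_lt_of_le ha with h | h
    · exfalso
      rw [← h] at hcon h1
      simp only [mul_zero, zero_mul] at hcon h1
      nlinarith [mul_nonneg hr hs]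
    · exact h
  have hra2 : (r*a)^2 = 2*a^2 := by linear_combination a^2*hr2
  have hra : r * a ≤ 5/6 := by
    nlinarith [sq_nonneg (r*a - 5/6)]
  -- step 1 : s > w + (4r/3) a
  have hstep1 : w + (4*r/3)*a < s := by
    by_contra hh
    push_neg at hh
    have hmul := mul_le_mul_of_nonneg_left hh (le_of_lt (mul_pos hr0 ha0))
    have hexp0 : r*a*(w + (4*r/3)*a) = r*a*w + (8/3)*a^2 := by
      linear_combination (4/3)*a^2*hr2
    rw [hexp0] at hmul
    linarith
  -- s ≤ 1/2
  have hs12 : s ≤ 1/2 := by nlinarith [sq_nonneg (2*s - 1)]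
  -- d² upper bound
  have hX0 : 0 ≤ r*a*s + a^2/3 := by positivity
  have hdX : d^2 ≤ (r*a*s + a^2/3)^2 := by
    rw [pow_two, pow_two]
    exact mul_le_mul h1 h1 hd hX0
  have hexp : (r*a*s + a^2/3)^2 = 2*a^2*s^2 + (2/3)*r*a^3*s + a^4/9 := by
    linear_combination a^2*s^2*hr2
  have h2s : 2*a^2*s^2 ≤ 2*a^2*(b*(1-b)) :=
    mul_le_mul_of_nonneg_left hsb (by positivity)
  have h3s : (2/3)*r*a^3*s ≤ (r*a/3)*a^2 := by
    have hra3 : (0:ℝ) ≤ r*a^3 := by positivity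
    have := mul_le_mul_of_nonneg_left hs12 hra3
    linarith
  have hd2 : d^2 ≤ 2*a^2*(b*(1-b)) + (r*a/3)*a^2 + a^4/9 := by
    rw [hexp] at hdX; linarith
  -- quadratic step : (w + ra(4/3 - b/2))² < w² + d² + (5/6)a²b²
  have hgap : (0:ℝ) < 4/3 - b/2 := by linarith
  have hpos : 0 < r*a*(4/3 - b/2) := by positivity
  have hsq : (w + r*a*(4/3 - b/2))^2 < w^2 + d^2 + (5/6)*a^2*b^2 := by
    have hlhs : w + r*a*(4/3 - b/2) < s - r*a*b/2 := by linarith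
    have hlhs0 : 0 ≤ w + r*a*(4/3 - b/2) := by positivity
    have hlt : (w + r*a*(4/3 - b/2))^2 < (s - r*a*b/2)^2 :=
      pow_lt_pow_left₀ hlhs hlhs0 two_ne_zero
    have hexp2 : (s - r*a*b/2)^2 = s^2 - r*a*b*s + a^2*b^2/2 := by
      linear_combination (a^2*b^2/4)*hr2
    rw [hexp2] at hlt
    linarith [h2]
  -- drop the w cross term and divide by a²
  have hdrop : 2*(4/3 - b/2)^2 * a^2 < d^2 + (5/6)*a^2*b^2 := by
    have hexp3 : (w + r*a*(4/3 - b/2))^2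
        = w^2 + 2*w*(r*a*(4/3 - b/2)) + 2*(4/3 - b/2)^2*a^2 := by
      linear_combination (a^2*(4/3 - b/2)^2)*hr2
    rw [hexp3] at hsq
    have : 0 ≤ 2*w*(r*a*(4/3 - b/2)) := by positivity
    linarith
  -- final contradiction
  have hbfac : 0 ≤ (9 - 5*b) * (1 - b) * a^2 :=
    mul_nonneg (mul_nonneg (by linarith) (by linarith)) (sq_nonneg a)
  have ha4 : a^4 ≤ a^2/3 := by nlinarith
  have hmul1 : r*a*a^2 ≤ (5/6)*a^2 := by nlinarith [sq_nonneg a]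
  have ha2pos : 0 < a^2 := by positivity
  linarith [hdrop, hd2, hmul1, ha4, hbfac, ha2pos]
open MeasureTheory ProbabilityTheory

set_option maxHeartbeats 1000000 in
/-- empirical Bernstein inequality, Audibert–Munos–Szepesvári:
Let `X_1,…,X_t` be i.i.d. `[0,1]`-valued random variables with mean `m`. With
`X̄ = (1/t)∑_s X_s` and `V = (1/t)∑_s (X_s − X̄)²`, for any `δ ∈ (0,1)`, with
probability at least `1 − δ`,
`|X̄ − m| ≤ √(2·V·ln(3/δ)/t) + 3·ln(3/δ)/t`. -/
theorem stmt16 {Ω : Type*} [MeasurableSpace Ω] (μ : Measure Ω) [IsProbabilityMeasure μ]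
    (t : ℕ) (ht : 1 ≤ t) (m : ℝ)
    (X : Fin t → Ω → ℝ) (hmeas : ∀ i, Measurable (X i))
    (hval : ∀ i ω, X i ω ∈ Set.Icc (0:ℝ) 1)
    (hindep : iIndepFun X μ)
    (hident : ∀ i j, IdentDistrib (X i) (X j) μ μ)
    (hmean : ∀ i, ∫ ω, X i ω ∂μ = m)
    (δ : ℝ) (hδ : δ ∈ Set.Ioo (0:ℝ) 1) :
    ENNReal.ofReal (1 - δ) ≤
      μ {ω | |(1/t) * ∑ s, X s ω - m| ≤
        Real.sqrt (2 * ((1/t) * ∑ s, (X s ω - (1/t) * ∑ r, X r ω)^2)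
            * Real.log (3/δ) / t)
          + 3 * Real.log (3/δ) / t} := by
  obtain ⟨hδ0, hδ1⟩ := hδ
  have hL0 : 0 < Real.log (3/δ) := Real.log_pos (by rw [lt_div_iff₀ hδ0]; linarith)
  set L : ℝ := Real.log (3/δ) with hLdef
  have hT : (0:ℝ) < (t:ℝ) := by exact_mod_cast Nat.pos_of_ne_zero (by omega)
  have i0 : Fin t := ⟨0, ht⟩
  -- basic facts
  have hint : ∀ i, Integrable (X i) μ :=
    fun i => integrable_of_bdd (hmeas i) (C := 1)
      (fun ω => abs_le.2 ⟨by linarith [(hval i ω).1], (hval i ω).2⟩)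
  have hm0 : 0 ≤ m := by
    rw [← hmean i0]
    exact integral_nonneg (fun ω => (hval i0 ω).1)
  have hm1 : m ≤ 1 := by
    rw [← hmean i0]
    calc ∫ ω, X i0 ω ∂μ ≤ ∫ _ω, (1:ℝ) ∂μ :=
          integral_mono (hint i0) (integrable_const 1) (fun ω => (hval i0 ω).2)
      _ = 1 := by simp
  -- trivial case
  rcases le_or_gt 1 (3 * L / (t:ℝ)) with hcase | hcase
  · have hsub : (Set.univ : Set Ω) ⊆ {ω | |(1/t) * ∑ s, X s ω - m| ≤
        Real.sqrt (2 * ((1/t) * ∑ s, (X s ω - (1/t) * ∑ r, X r ω)^2)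
            * Real.log (3/δ) / t)
          + 3 * Real.log (3/δ) / t} := by
      intro ω _
      simp only [Set.mem_setOf_eq]
      have hXb0 : 0 ≤ (1/(t:ℝ)) * ∑ s, X s ω := by
        apply mul_nonneg (by positivity)
        exact Finset.sum_nonneg (fun i _ => (hval i ω).1)
      have hXb1 : (1/(t:ℝ)) * ∑ s, X s ω ≤ 1 := by
        rw [mul_comm, ← le_div_iff₀ (by positivity)]
        calc ∑ s, X s ω ≤ ∑ _s : Fin t, (1:ℝ) := Finset.sum_le_sum (fun i _ => (hval i ω).2)
          _ = (t:ℝ) := by simp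
          _ = 1 / (1/(t:ℝ)) := by field_simp
      have habs : |(1/(t:ℝ)) * ∑ s, X s ω - m| ≤ 1 :=
        abs_le.2 ⟨by linarith, by linarith⟩
      have hsq : 0 ≤ Real.sqrt (2 * ((1/(t:ℝ)) * ∑ s, (X s ω - (1/(t:ℝ)) * ∑ r, X r ω)^2)
          * L / (t:ℝ)) := Real.sqrt_nonneg _
      linarith
    calc ENNReal.ofReal (1-δ) ≤ 1 := ENNReal.ofReal_le_one.2 (by linarith)
      _ = μ Set.univ := measure_univ.symm
      _ ≤ _ := measure_mono hsub
  · -- MAIN CASE : 3L/t < 1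
    have hLt3 : L / (t:ℝ) ≤ 1/3 := by
      rw [div_lt_iff₀ hT] at hcase
      rw [div_le_iff₀ hT]
      linarith
    set v : ℝ := ∫ ω, (X i0 ω - m)^2 ∂μ with hvdef
    have hv_i : ∀ i, ∫ ω, (X i ω - m)^2 ∂μ = v := by
      intro i
      have := ((hident i i0).comp (u := fun x => (x - m)^2)
        ((measurable_id.sub_const m).pow_const 2)).integral_eq
      simpa [Function.comp] using this
    have hv0 : 0 ≤ v := by
      rw [hvdef]; exact integral_nonneg (fun ω => sq_nonneg _)
    set b : ℝ := max m (1 - m) with hbdef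
    have hb1 : 1/2 ≤ b := by
      rcases le_total m (1/2) with h | h
      · exact le_max_of_le_right (by linarith)
      · exact le_max_of_le_left h
    have hb2 : b ≤ 1 := max_le hm1 (by linarith)
    have hmb : m ≤ b := le_max_left _ _
    have h1mb : 1 - m ≤ b := le_max_right _ _
    have hb0 : 0 < b := by linarith
    have habsb : ∀ i ω, |X i ω - m| ≤ b := fun i ω =>
      abs_le.2 ⟨by linarith [(hval i ω).1], by linarith [(hval i ω).2]⟩
    have hZub : ∀ i ω, (X i ω - m)^2 ≤ b^2 := fun i ω => by
      rw [← sq_abs]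
      exact pow_le_pow_left₀ (abs_nonneg _) (habsb i ω) 2
    have hintZ : ∀ i, Integrable (fun ω => (X i ω - m)^2) μ := fun i =>
      integrable_of_bdd (((hmeas i).sub_const m).pow_const 2) (C := b^2) (fun ω => by
        rw [abs_of_nonneg (sq_nonneg _)]; exact hZub i ω)
    have hintZ2 : ∀ i, Integrable (fun ω => ((X i ω - m)^2)^2) μ := fun i =>
      integrable_of_bdd ((((hmeas i).sub_const m).pow_const 2).pow_const 2)
        (C := b^4) (fun ω => by
          rw [abs_of_nonneg (sq_nonneg _), show b^4 = (b^2)^2 by ring]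
          exact pow_le_pow_left₀ (sq_nonneg _) (hZub i ω) 2)
    have hvub : v ≤ b * (1 - b) := by
      have hpt : ∀ ω, (X i0 ω - m)^2 ≤ (1 - 2*m) * X i0 ω + m^2 := by
        intro ω; nlinarith [(hval i0 ω).1, (hval i0 ω).2]
      have hint2 : Integrable (fun ω => (1 - 2*m) * X i0 ω + m^2) μ :=
        ((hint i0).const_mul _).add (integrable_const _)
      have hle : v ≤ ∫ ω, ((1 - 2*m) * X i0 ω + m^2) ∂μ := by
        rw [hvdef]; exact integral_mono (hintZ i0) hint2 hpt
      have heq : ∫ ω, ((1 - 2*m) * X i0 ω + m^2) ∂μ = (1 - 2*m)*m + m^2 := by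
        rw [integral_add ((hint i0).const_mul _) (integrable_const _), integral_const_mul,
          hmean i0, integral_const]
        simp
      have hmb2 : m * (1 - m) = b * (1 - b) := by
        rcases max_cases m (1 - m) with ⟨hb', _⟩ | ⟨hb', _⟩ <;> rw [hbdef, hb'] <;> ring
      rw [heq] at hle
      nlinarith [hle]
    have hvb2 : v ≤ b^2 := by nlinarith
    -- Bernstein event 1 : upper tail of ∑ (X i - m)
    have hS1 : μ {ω | Real.sqrt (2*((t:ℝ)*v)*L) + 1*L/3 ≤ ∑ i, (X i ω - m)}
        ≤ ENNReal.ofReal (Real.exp (-L)) := by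
      refine bernstein_tail (fun i => (hmeas i).sub_const m) one_pos hv0 hL0
        (fun i ω => le_trans (habsb i ω) hb2) ?_ ?_ ?_
      · exact hindep.comp (fun i => fun x => x - m) (fun i => measurable_id.sub_const m)
      · intro i
        rw [integral_sub (hint i) (integrable_const m), hmean i, integral_const]
        simp
      · intro i
        rw [hv_i i]
    -- Bernstein event 2 : upper tail of ∑ (m - X i)
    have hS2 : μ {ω | Real.sqrt (2*((t:ℝ)*v)*L) + 1*L/3 ≤ ∑ i, (m - X i ω)}
        ≤ ENNReal.ofReal (Real.exp (-L)) := by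
      refine bernstein_tail (Y := fun i ω => m - X i ω) (fun i => measurable_const.sub (hmeas i)) one_pos hv0 hL0
        (fun i ω => by rw [abs_sub_comm]; exact le_trans (habsb i ω) hb2) ?_ ?_ ?_
      · exact hindep.comp (fun i => fun x => m - x) (fun i => measurable_const.sub measurable_id)
      · intro i
        rw [integral_sub (integrable_const m) (hint i), hmean i, integral_const]
        simp
      · intro i
        have e : (fun ω => (m - X i ω)^2) = (fun ω => (X i ω - m)^2) := by
          funext ω; ring
        rw [e, hv_i i]
    -- Bernstein event 3 : upper tail of ∑ (v - (X i - m)²)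
    have hS3 : μ {ω | Real.sqrt (2*((t:ℝ)*(b^2*v))*L) + b^2*L/3
          ≤ ∑ i, (v - (X i ω - m)^2)}
        ≤ ENNReal.ofReal (Real.exp (-L)) := by
      refine bernstein_tail (Y := fun i ω => v - (X i ω - m)^2)
        (fun i => measurable_const.sub (((hmeas i).sub_const m).pow_const 2))
        (by positivity) (by positivity) hL0
        (fun i ω => abs_le.2 ⟨by nlinarith [hZub i ω], by nlinarith [sq_nonneg (X i ω - m)]⟩)
        ?_ ?_ ?_
      · exact hindep.comp (fun i => fun x => v - (x - m)^2)
          (fun i => measurable_const.sub ((measurable_id.sub_const m).pow_const 2))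
      · intro i
        rw [integral_sub (integrable_const v) (hintZ i), hv_i i, integral_const]
        simp
      · intro i
        have e : (fun ω => (v - (X i ω - m)^2)^2)
            = (fun ω => (v^2 - 2*v*(X i ω - m)^2) + ((X i ω - m)^2)^2) := by
          funext ω; ring
        have hf1 : Integrable (fun ω => v^2 - 2*v*(X i ω - m)^2) μ :=
          (integrable_const _).sub ((hintZ i).const_mul (2*v))
        rw [e, integral_add hf1 (hintZ2 i),
          integral_sub (integrable_const _) ((hintZ i).const_mul (2*v)),
          integral_const, integral_const_mul, hv_i i]
        have hZ2le : ∫ ω, ((X i ω - m)^2)^2 ∂μ ≤ b^2 * v := by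
          calc ∫ ω, ((X i ω - m)^2)^2 ∂μ ≤ ∫ ω, b^2 * (X i ω - m)^2 ∂μ :=
              integral_mono (hintZ2 i) ((hintZ i).const_mul _)
                (fun ω => by nlinarith [hZub i ω, sq_nonneg (X i ω - m)])
            _ = b^2 * v := by rw [integral_const_mul, hv_i i]
        simp only [probReal_univ, ENNReal.toReal_one, smul_eq_mul, one_mul]
        nlinarith [sq_nonneg v]
    -- combine events
    have hexpL : Real.exp (-L) = δ/3 := by
      rw [Real.exp_neg, hLdef, Real.exp_log (by positivity), inv_div]
    set S1 := {ω | Real.sqrt (2*((t:ℝ)*v)*L) + 1*L/3 ≤ ∑ i, (X i ω - m)} with hS1def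
    set S2 := {ω | Real.sqrt (2*((t:ℝ)*v)*L) + 1*L/3 ≤ ∑ i, (m - X i ω)} with hS2def
    set S3 := {ω | Real.sqrt (2*((t:ℝ)*(b^2*v))*L) + b^2*L/3
        ≤ ∑ i, (v - (X i ω - m)^2)} with hS3def
    have hmS1 : MeasurableSet S1 := measurableSet_le measurable_const
      (Finset.measurable_sum _ (fun i _ => (hmeas i).sub_const m))
    have hmS2 : MeasurableSet S2 := measurableSet_le measurable_const
      (Finset.measurable_sum _ (fun i _ => measurable_const.sub (hmeas i)))
    have hmS3 : MeasurableSet S3 := measurableSet_le measurable_const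
      (Finset.measurable_sum _
        (fun i _ => measurable_const.sub (((hmeas i).sub_const m).pow_const 2)))
    have hδ3 : (0:ℝ) ≤ δ/3 := by linarith
    have hU : μ (S1 ∪ S2 ∪ S3) ≤ ENNReal.ofReal δ := by
      rw [hexpL] at hS1 hS2 hS3
      calc μ (S1 ∪ S2 ∪ S3) ≤ μ (S1 ∪ S2) + μ S3 := measure_union_le _ _
        _ ≤ (μ S1 + μ S2) + μ S3 := add_le_add_left (measure_union_le _ _) _
        _ ≤ (ENNReal.ofReal (δ/3) + ENNReal.ofReal (δ/3)) + ENNReal.ofReal (δ/3) :=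
            add_le_add (add_le_add hS1 hS2) hS3
        _ = ENNReal.ofReal δ := by
            rw [← ENNReal.ofReal_add hδ3 hδ3, ← ENNReal.ofReal_add (by linarith) hδ3]
            congr 1
            ring
    -- complement inclusion
    have hsub : (S1 ∪ S2 ∪ S3)ᶜ ⊆ {ω | |(1/t) * ∑ s, X s ω - m| ≤
        Real.sqrt (2 * ((1/t) * ∑ s, (X s ω - (1/t) * ∑ r, X r ω)^2)
            * Real.log (3/δ) / t)
          + 3 * Real.log (3/δ) / t} := by
      intro ω hω
      simp only [Set.mem_compl_iff, Set.mem_union, not_or, hS1def, hS2def, hS3def,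
        Set.mem_setOf_eq, not_le] at hω
      obtain ⟨⟨hw1, hw2⟩, hw3⟩ := hω
      rw [Set.mem_setOf_eq, ← hLdef]
      -- abbreviations
      set SX := ∑ s, X s ω with hSXdef
      set XB := (1/(t:ℝ)) * SX with hXBdef
      set W := ∑ s, (X s ω - m)^2 with hWdef
      set VV := (1/(t:ℝ)) * ∑ s, (X s ω - XB)^2 with hVVdef
      set aa := Real.sqrt (L/(t:ℝ)) with haadef
      set ss := Real.sqrt v with hssdef
      set rr := Real.sqrt 2 with hrrdef
      have ha2' : aa^2 = L/(t:ℝ) := Real.sq_sqrt (by positivity)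
      have hs2 : ss^2 = v := Real.sq_sqrt hv0
      have hr2 : rr^2 = 2 := Real.sq_sqrt (by norm_num)
      have hVV0 : 0 ≤ VV := by
        rw [hVVdef]
        exact mul_nonneg (by positivity) (Finset.sum_nonneg (fun i _ => sq_nonneg _))
      set ww := Real.sqrt VV with hwwdef
      have hww2 : ww^2 = VV := Real.sq_sqrt hVV0
      have haa : 0 ≤ aa := Real.sqrt_nonneg _
      have hss : 0 ≤ ss := Real.sqrt_nonneg _
      have hrr : 0 ≤ rr := Real.sqrt_nonneg _
      have hww : 0 ≤ ww := Real.sqrt_nonneg _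
      have hL_ta : L = (t:ℝ)*aa^2 := by rw [ha2']; field_simp
      -- sums in terms of SX, W
      have hsum1 : ∑ i, (X i ω - m) = SX - (t:ℝ)*m := by
        rw [Finset.sum_sub_distrib, Finset.sum_const, Finset.card_univ,
          Fintype.card_fin, nsmul_eq_mul]
      have hsum2 : ∑ i, (m - X i ω) = (t:ℝ)*m - SX := by
        rw [Finset.sum_sub_distrib, Finset.sum_const, Finset.card_univ,
          Fintype.card_fin, nsmul_eq_mul]
      have hsum3 : ∑ i, (v - (X i ω - m)^2) = (t:ℝ)*v - W := by
        rw [Finset.sum_sub_distrib, Finset.sum_const, Finset.card_univ,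
          Fintype.card_fin, nsmul_eq_mul]
      rw [hsum1] at hw1
      rw [hsum2] at hw2
      rw [hsum3] at hw3
      -- epsilon identities
      have hε1 : Real.sqrt (2*((t:ℝ)*v)*L) = (t:ℝ)*(rr*aa*ss) := by
        have hq : ((t:ℝ)*(rr*aa*ss))^2 = 2*((t:ℝ)*v)*L := by
          have e : ((t:ℝ)*(rr*aa*ss))^2 = (t:ℝ)^2*(rr^2*(aa^2*ss^2)) := by ring
          rw [e, hr2, ha2', hs2]
          field_simp
        rw [← hq, Real.sqrt_sq (by positivity)]
      have hε3 : Real.sqrt (2*((t:ℝ)*(b^2*v))*L) = (t:ℝ)*(rr*aa*(b*ss)) := by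
        have hq : ((t:ℝ)*(rr*aa*(b*ss)))^2 = 2*((t:ℝ)*(b^2*v))*L := by
          have e : ((t:ℝ)*(rr*aa*(b*ss)))^2 = (t:ℝ)^2*(rr^2*(aa^2*(b^2*ss^2))) := by ring
          rw [e, hr2, ha2', hs2]
          field_simp
        rw [← hq, Real.sqrt_sq (by positivity)]
      rw [hε1] at hw1 hw2
      rw [hε3] at hw3
      -- structural identities
      have hXBm : XB - m = (SX - (t:ℝ)*m)/(t:ℝ) := by
        rw [hXBdef]; field_simp
      have hTXB : (t:ℝ) * XB = SX := by rw [hXBdef]; field_simp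
      have hid : ∑ i, (X i ω - XB)^2 = W - (t:ℝ)*(XB - m)^2 := by
        have e1 : ∀ i : Fin t, (X i ω - XB)^2
            = (X i ω - m)^2 + ((m - XB) * (2 * X i ω - XB - m)) := fun i => by ring
        rw [Finset.sum_congr rfl (fun i _ => e1 i), Finset.sum_add_distrib,
          ← Finset.mul_sum]
        have e2 : ∑ i, (2 * X i ω - XB - m) = 2*SX - (t:ℝ)*(XB + m) := by
          rw [show (fun i : Fin t => 2 * X i ω - XB - m)
              = (fun i : Fin t => 2 * X i ω - (XB + m)) from by funext i; ring,
            Finset.sum_sub_distrib, ← Finset.mul_sum, Finset.sum_const,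
            Finset.card_univ, Fintype.card_fin, nsmul_eq_mul, ← hSXdef]
        rw [e2, ← hWdef]
        linear_combination (2*(XB - m)) * hTXB
      have hWVV : W = (t:ℝ)*VV + (t:ℝ)*(XB - m)^2 := by
        rw [hVVdef, hid]
        field_simp
        ring
      -- make everything opaque for the final algebra
      clear_value SX XB W VV aa ss rr ww
      -- D bound
      have hD : |XB - m| = |SX - (t:ℝ)*m| / (t:ℝ) := by
        rw [hXBm, abs_div, abs_of_pos hT]
      have habsSX : |SX - (t:ℝ)*m| < (t:ℝ)*(rr*aa*ss) + 1*L/3 :=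
        abs_sub_lt_iff.2 ⟨by linarith, by linarith⟩
      have hdet1 : |XB - m| ≤ rr*aa*ss + aa^2/3 := by
        rw [hD, div_le_iff₀ hT]
        calc |SX - (t:ℝ)*m| ≤ (t:ℝ)*(rr*aa*ss) + 1*L/3 := habsSX.le
          _ = (rr*aa*ss + aa^2/3) * (t:ℝ) := by rw [hL_ta]; ring
      -- second det hypothesis
      have hdet2 : ss^2 ≤ ww^2 + |XB - m|^2 + rr*aa*b*ss + aa^2*b^2/3 := by
        rw [hs2, hww2, sq_abs]
        have h3' : (t:ℝ)*v - W < (t:ℝ)*(rr*aa*(b*ss)) + b^2*L/3 := hw3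
        rw [hWVV, hL_ta] at h3'
        have hstep : (t:ℝ)*v
            < (t:ℝ)*(VV + (XB - m)^2 + rr*aa*b*ss + aa^2*b^2/3) := by linarith [h3']
        have := (mul_lt_mul_iff_right₀ hT).1 hstep
        linarith
      -- apply the deterministic lemma
      have hdet := det_core (a := aa) (b := b) (s := ss) (d := |XB - m|) (w := ww)
        (r := rr) haa hss (abs_nonneg _) hww hrr hr2
        (by rw [ha2']; exact hLt3) hb1 hb2 (by rw [hs2]; exact hvub) hdet1 hdet2
      -- convert conclusion
      have hfin1 : Real.sqrt (2 * VV * L / (t:ℝ)) = rr*aa*ww := by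
        have hq : (rr*aa*ww)^2 = 2 * VV * L / (t:ℝ) := by
          have e : (rr*aa*ww)^2 = rr^2*(aa^2*ww^2) := by ring
          rw [e, hr2, ha2', hww2]
          ring
        rw [← hq, Real.sqrt_sq (by positivity)]
      have hfin2 : 3 * L / (t:ℝ) = 3 * aa^2 := by rw [hL_ta]; field_simp
      rw [hfin1, hfin2]
      exact hdet
    -- final measure computation
    have hmU : MeasurableSet (S1 ∪ S2 ∪ S3) := (hmS1.union hmS2).union hmS3
    have hcompl : μ ((S1 ∪ S2 ∪ S3)ᶜ) = 1 - μ (S1 ∪ S2 ∪ S3) :=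
      prob_compl_eq_one_sub hmU
    calc ENNReal.ofReal (1 - δ) = 1 - ENNReal.ofReal δ := by
          rw [ENNReal.ofReal_sub _ hδ0.le, ENNReal.ofReal_one]
      _ ≤ 1 - μ (S1 ∪ S2 ∪ S3) := tsub_le_tsub_left hU 1
      _ = μ ((S1 ∪ S2 ∪ S3)ᶜ) := hcompl.symm
      _ ≤ _ := measure_mono hsub
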